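/- For the regex α = ((x{a⁺} y{b⁺}) | y{a⁺}) (x d)⁺ y over Σ = {a,b,d}, the dereferenced language equals {aⁿ bᵐ (aⁿ d)ᵏ bᵐ | n,m,k ≥ 1} ∪ {aⁿ dᵏ aⁿ | n,k ≥ 1}. -/

import Mathlib

/-- The alphabet {a, b, d}. -/
inductive ABD where
  | a | b | d
deriving DecidableEq

/-- Symbols of ref-words over alphabet S and variables X. -/
inductive RSym (S X : Type) where
  | sym (a : S)
  | recall (x : X)
  | openB (x : X)
  | closeB (x : X)
deriving DecidableEq

/-- State of the dereferencing process: output so far, current contents of each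
variable, and which variables are currently open. -/
structure DState (S X : Type) where
  out : List S
  env : X → List S
  opn : X → Bool

/-- One step of dereferencing: terminals and recalled contents are appended to
the output and to all open variables; ⟨x resets x's content and opens it;
⟩x closes x.  A recall of an unbound variable contributes ε. -/
def Dstep {S X : Type} [DecidableEq X] (st : DState S X) : RSym S X → DState S X
  | .sym a => ⟨st.out ++ [a],
      fun y => if st.opn y then st.env y ++ [a] else st.env y, st.opn⟩
  | .recall x => ⟨st.out ++ st.env x,
      fun y => if st.opn y then st.env y ++ st.env x else st.env y, st.opn⟩
  | .openB x => ⟨st.out, Function.update st.env x [], Function.update st.opn x true⟩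
  | .closeB x => ⟨st.out, st.env, Function.update st.opn x false⟩

/-- The dereference of a ref-word: each recall is replaced by the content of the
closest matching bracket pair to its left (ε if none), brackets are erased. -/
def deref {S X : Type} [DecidableEq X] (w : List (RSym S X)) : List S :=
  (w.foldl Dstep ⟨[], fun _ => [], fun _ => false⟩).out

/-- The two variables: `x` and `y`. -/
def xv : Fin 2 := 0
def yv : Fin 2 := 1

/-- The ref-language of α = ((x{a⁺} y{b⁺}) | y{a⁺}) (x d)⁺ y. -/
def RefL : Set (List (RSym ABD (Fin 2))) :=
  { w | ∃ n m k : ℕ, 1 ≤ n ∧ 1 ≤ m ∧ 1 ≤ k ∧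
      w = [RSym.openB xv] ++ List.replicate n (RSym.sym ABD.a) ++ [RSym.closeB xv] ++
          [RSym.openB yv] ++ List.replicate m (RSym.sym ABD.b) ++ [RSym.closeB yv] ++
          (List.replicate k [RSym.recall xv, RSym.sym ABD.d]).flatten ++
          [RSym.recall yv] } ∪
  { w | ∃ n k : ℕ, 1 ≤ n ∧ 1 ≤ k ∧
      w = [RSym.openB yv] ++ List.replicate n (RSym.sym ABD.a) ++ [RSym.closeB yv] ++
          (List.replicate k [RSym.recall xv, RSym.sym ABD.d]).flatten ++
          [RSym.recall yv] }

lemma DState.ext' {S X : Type} {s t : DState S X} (h1 : s.out = t.out)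
    (h2 : ∀ y, s.env y = t.env y) (h3 : ∀ y, s.opn y = t.opn y) : s = t := by
  cases s; cases t
  simp_all [funext_iff]

lemma foldl_sym_replicate {S X : Type} [DecidableEq X] (c : S) (n : ℕ) (st : DState S X) :
    List.foldl Dstep st (List.replicate n (RSym.sym c)) =
      ⟨st.out ++ List.replicate n c,
       fun y => if st.opn y then st.env y ++ List.replicate n c else st.env y,
       st.opn⟩ := by
  induction n generalizing st with
  | zero =>
      refine DState.ext' (by simp) (fun y => ?_) (fun y => rfl)
      by_cases h : st.opn y <;> simp [h]
  | succ n ih =>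
      rw [List.replicate_succ, List.foldl_cons, ih]
      refine DState.ext' ?_ (fun y => ?_) (fun y => rfl)
      · simp [Dstep, List.replicate_succ]
      · by_cases h : st.opn y <;> simp [Dstep, h, List.replicate_succ]

lemma foldl_recall_d {S : Type} (d : S) (k : ℕ) (o : List S) (e : Fin 2 → List S) :
    List.foldl Dstep (⟨o, e, fun _ => false⟩ : DState S (Fin 2))
        (List.replicate k [RSym.recall xv, RSym.sym d]).flatten =
      ⟨o ++ (List.replicate k (e xv ++ [d])).flatten, e, fun _ => false⟩ := by
  induction k generalizing o with
  | zero => simp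
  | succ k ih =>
      rw [List.replicate_succ, List.flatten_cons, List.foldl_append]
      have h1 : List.foldl Dstep (⟨o, e, fun _ => false⟩ : DState S (Fin 2))
          [RSym.recall xv, RSym.sym d] = ⟨o ++ e xv ++ [d], e, fun _ => false⟩ := by
        simp [Dstep]
      rw [h1, ih]
      simp [List.replicate_succ]

lemma deref_word1 (n m k : ℕ) :
    deref ([RSym.openB xv] ++ List.replicate n (RSym.sym ABD.a) ++ [RSym.closeB xv] ++
          [RSym.openB yv] ++ List.replicate m (RSym.sym ABD.b) ++ [RSym.closeB yv] ++
          (List.replicate k [RSym.recall xv, RSym.sym ABD.d]).flatten ++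
          [RSym.recall yv]) =
      List.replicate n ABD.a ++ List.replicate m ABD.b ++
        (List.replicate k (List.replicate n ABD.a ++ [ABD.d])).flatten ++
        List.replicate m ABD.b := by
  set ra := List.replicate n ABD.a
  set rb := List.replicate m ABD.b
  unfold deref
  simp only [List.foldl_append, List.foldl_cons, List.foldl_nil]
  have t1 : Dstep (⟨[], fun _ => [], fun _ => false⟩ : DState ABD (Fin 2)) (RSym.openB xv) =
      ⟨[], fun _ => [], fun y => decide (y = xv)⟩ := by
    refine DState.ext' (by simp [Dstep]) (fun y => ?_) (fun y => ?_) <;> fin_cases y <;>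
      simp [Dstep, Function.update, xv, yv]
  have t2 : Dstep (⟨[] ++ ra,
      fun y => if (decide (y = xv) : Bool) then ([] : List ABD) ++ ra else [],
      fun y => decide (y = xv)⟩ : DState ABD (Fin 2)) (RSym.closeB xv) =
      ⟨ra, fun y => if y = xv then ra else [], fun _ => false⟩ := by
    refine DState.ext' (by simp [Dstep]) (fun y => ?_) (fun y => ?_) <;> fin_cases y <;>
      simp [Dstep, Function.update, xv, yv]
  have t3 : Dstep (⟨ra, fun y => if y = xv then ra else [], fun _ => false⟩ :
      DState ABD (Fin 2)) (RSym.openB yv) =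
      ⟨ra, fun y => if y = xv then ra else [], fun y => decide (y = yv)⟩ := by
    refine DState.ext' (by simp [Dstep]) (fun y => ?_) (fun y => ?_) <;> fin_cases y <;>
      simp [Dstep, Function.update, xv, yv]
  have t4 : Dstep (⟨ra ++ rb,
      fun y => if (decide (y = yv) : Bool) then (if y = xv then ra else []) ++ rb
               else (if y = xv then ra else []),
      fun y => decide (y = yv)⟩ : DState ABD (Fin 2)) (RSym.closeB yv) =
      ⟨ra ++ rb, fun y => if y = xv then ra else rb, fun _ => false⟩ := by
    refine DState.ext' (by simp [Dstep]) (fun y => ?_) (fun y => ?_) <;> fin_cases y <;>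
      simp [Dstep, Function.update, xv, yv]
  simp +zetaDelta only [t1, foldl_sym_replicate, t2, t3, t4, foldl_recall_d]
  simp [Dstep, xv, yv]

lemma deref_word2 (n k : ℕ) :
    deref ([RSym.openB yv] ++ List.replicate n (RSym.sym ABD.a) ++ [RSym.closeB yv] ++
          (List.replicate k [RSym.recall xv, RSym.sym ABD.d]).flatten ++
          [RSym.recall yv]) =
      List.replicate n ABD.a ++ List.replicate k ABD.d ++ List.replicate n ABD.a := by
  set ra := List.replicate n ABD.a
  unfold deref
  simp only [List.foldl_append, List.foldl_cons, List.foldl_nil]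
  have t1 : Dstep (⟨[], fun _ => [], fun _ => false⟩ : DState ABD (Fin 2)) (RSym.openB yv) =
      ⟨[], fun _ => [], fun y => decide (y = yv)⟩ := by
    refine DState.ext' (by simp [Dstep]) (fun y => ?_) (fun y => ?_) <;> fin_cases y <;>
      simp [Dstep, Function.update, xv, yv]
  have t2 : Dstep (⟨[] ++ ra,
      fun y => if (decide (y = yv) : Bool) then ([] : List ABD) ++ ra else [],
      fun y => decide (y = yv)⟩ : DState ABD (Fin 2)) (RSym.closeB yv) =
      ⟨ra, fun y => if y = yv then ra else [], fun _ => false⟩ := by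
    refine DState.ext' (by simp [Dstep]) (fun y => ?_) (fun y => ?_) <;> fin_cases y <;>
      simp [Dstep, Function.update, xv, yv]
  simp +zetaDelta only [t1, foldl_sym_replicate, t2, foldl_recall_d]
  have hx : (fun y => if y = yv then ra else []) xv = [] := by simp [xv, yv]
  have hflat : (List.replicate k (([] : List ABD) ++ [ABD.d])).flatten =
      List.replicate k ABD.d := by
    induction k with
    | zero => simp
    | succ k ih => simp [List.replicate_succ, ih]
  simp [Dstep, hx, hflat, xv, yv]

/-- The dereferenced language of α = ((x{a⁺} y{b⁺}) | y{a⁺}) (x d)⁺ y equals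
{aⁿ bᵐ (aⁿ d)ᵏ bᵐ | n,m,k ≥ 1} ∪ {aⁿ dᵏ aⁿ | n,k ≥ 1}. -/
theorem regex_example_language :
    deref '' RefL =
      { z : List ABD | ∃ n m k : ℕ, 1 ≤ n ∧ 1 ≤ m ∧ 1 ≤ k ∧
          z = List.replicate n ABD.a ++ List.replicate m ABD.b ++
              (List.replicate k (List.replicate n ABD.a ++ [ABD.d])).flatten ++
              List.replicate m ABD.b } ∪
      { z : List ABD | ∃ n k : ℕ, 1 ≤ n ∧ 1 ≤ k ∧
          z = List.replicate n ABD.a ++ List.replicate k ABD.d ++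
              List.replicate n ABD.a } := by
  ext z
  constructor
  · rintro ⟨w, (⟨n, m, k, hn, hm, hk, rfl⟩ | ⟨n, k, hn, hk, rfl⟩), rfl⟩
    · exact Or.inl ⟨n, m, k, hn, hm, hk, deref_word1 n m k⟩
    · exact Or.inr ⟨n, k, hn, hk, deref_word2 n k⟩
  · rintro (⟨n, m, k, hn, hm, hk, rfl⟩ | ⟨n, k, hn, hk, rfl⟩)
    · exact ⟨_, Or.inl ⟨n, m, k, hn, hm, hk, rfl⟩, deref_word1 n m k⟩
    · exact ⟨_, Or.inr ⟨n, k, hn, hk, rfl⟩, deref_word2 n k⟩
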